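/- Let (X_n)_{n≥1} be a sequence of i.i.d. random variables with expectation μ, satisfying 0 ≤ X_n ≤ B almost surely for some constant B > 0. Then for every δ ∈ (0,1), with probability at least 1 − δ, simultaneously for all n ≥ 1 it holds that |∑_{i=1}^n (X_i − μ)| ≤ 2·√(B·μ·n·log(2n/δ)) + B·log(2n/δ). -/

import Mathlib

open MeasureTheory ProbabilityTheory Finset

section AnytimeBernsteinAux
open Real


lemma lemA (x : ℝ) (hx : 0 ≤ x) : x ≤ (1+x) * Real.log (1+x) := by
  have h1 : (0:ℝ) < 1 + x := by linarith
  have h2 : Real.log (1/(1+x)) ≤ 1/(1+x) - 1 := Real.log_le_sub_one_of_pos (by positivity)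
  rw [Real.log_div one_ne_zero h1.ne', Real.log_one] at h2
  have h3 : x / (1+x) ≤ Real.log (1+x) := by
    have : 1/(1+x) - 1 = -(x/(1+x)) := by field_simp; ring
    rw [this] at h2; linarith
  calc x = (1+x) * (x/(1+x)) := by field_simp
  _ ≤ (1+x) * Real.log (1+x) := mul_le_mul_of_nonneg_left h3 h1.le

lemma lemC (x : ℝ) (hx : x ≤ 0) : Real.exp x ≤ 1 + x + x^2/2 := by
  have key : MonotoneOn (fun y : ℝ => Real.exp y - (1 + y + y^2/2)) (Set.Iic 0) := by
    apply monotoneOn_of_deriv_nonneg (convex_Iic 0)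
    · fun_prop
    · fun_prop
    · intro y hy
      have hd : HasDerivAt (fun y : ℝ => Real.exp y - (1 + y + y^2/2))
          (Real.exp y - (0 + 1 + 2*y/2)) y := by
        have h1 : HasDerivAt (fun y : ℝ => 1 + y + y^2/2) (0 + 1 + 2*y/2) y := by
          have := ((hasDerivAt_id y).const_add (1:ℝ)).add
            (((hasDerivAt_pow 2 y)).div_const 2)
          exact this.congr_deriv (by norm_num)
        exact (Real.hasDerivAt_exp y).sub h1
      rw [hd.deriv]
      nlinarith [Real.add_one_le_exp y]
  have h0 := key (Set.mem_Iic.2 hx) (Set.mem_Iic.2 le_rfl) hx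
  simp at h0
  linarith

lemma lemB (s : ℝ) (hs : 0 ≤ s) : 2*s + 3*s^2 ≤ 2*(1+s)^2 * Real.log (1+s) := by
  have key : MonotoneOn (fun y : ℝ => 2*(1+y)^2 * Real.log (1+y) - (2*y + 3*y^2))
      (Set.Ici 0) := by
    apply monotoneOn_of_deriv_nonneg (convex_Ici 0)
    · apply ContinuousOn.sub
      · apply ContinuousOn.mul (by fun_prop)
        intro y hy
        have : (0:ℝ) < 1 + y := by simp at hy; linarith
        exact ((Real.continuousAt_log this.ne').comp
          (by fun_prop : Continuous (fun y : ℝ => 1 + y)).continuousAt).continuousWithinAt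
      · fun_prop
    · intro y hy
      rw [interior_Ici] at hy
      have h1y : (0:ℝ) < 1 + y := by simp at hy; linarith
      apply DifferentiableAt.differentiableWithinAt
      apply DifferentiableAt.sub
      · exact (by fun_prop : DifferentiableAt ℝ (fun y : ℝ => 2*(1+y)^2) y).mul
          ((Real.differentiableAt_log h1y.ne').comp y (by fun_prop))
      · fun_prop
    · intro y hy
      rw [interior_Ici] at hy
      have hy0 : (0:ℝ) < y := hy
      have h1y : (0:ℝ) < 1 + y := by linarith
      have hlog : HasDerivAt (fun y : ℝ => Real.log (1+y)) (1/(1+y)) y := by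
        exact ((Real.hasDerivAt_log h1y.ne').comp y
          ((hasDerivAt_id y).const_add (1:ℝ))).congr_deriv (by simp)
      have hpoly : HasDerivAt (fun y : ℝ => 2*(1+y)^2) (2*(2*(1+y))) y := by
        have : HasDerivAt (fun y : ℝ => (1+y)^2) (2*(1+y)^(2-1)*1) y :=
          (hasDerivAt_pow 2 _).comp y ((hasDerivAt_id y).const_add (1:ℝ))
        simpa using this.const_mul (2:ℝ)
      have hd : HasDerivAt (fun y : ℝ => 2*(1+y)^2 * Real.log (1+y) - (2*y + 3*y^2))
          (2*(2*(1+y)) * Real.log (1+y) + 2*(1+y)^2 * (1/(1+y)) - (2 + 3*(2*y))) y := by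
        apply HasDerivAt.sub (hpoly.mul hlog)
        have : HasDerivAt (fun y : ℝ => 2*y + 3*y^2) (2*1 + 3*(2*y^(2-1)*1)) y :=
          (((hasDerivAt_id y).const_mul 2).add ((hasDerivAt_pow 2 y).const_mul
            (3:ℝ))).congr_deriv (by norm_num)
        simpa using this
      rw [hd.deriv]
      have hA := lemA y hy0.le
      have : 2*(1+y)^2 * (1/(1+y)) = 2*(1+y) := by field_simp
      rw [this]
      nlinarith [hA]
  have h0 := key (Set.mem_Ici.2 le_rfl) (Set.mem_Ici.2 hs) hs
  simp at h0
  linarith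

lemma telesum (δ : ℝ) (hδ : 0 < δ) :
    HasSum (fun k : ℕ => δ ^ 2 / (((k : ℝ) + 1) * ((k : ℝ) + 2))) (δ ^ 2) := by
  rw [hasSum_iff_tendsto_nat_of_nonneg (fun k => by positivity)]
  have hps : ∀ n : ℕ, ∑ k ∈ Finset.range n, δ ^ 2 / (((k : ℝ) + 1) * ((k : ℝ) + 2))
      = δ ^ 2 / 1 - δ ^ 2 / ((n : ℝ) + 1) := by
    intro n
    have h := Finset.sum_range_sub' (f := fun k : ℕ => δ ^ 2 / ((k : ℝ) + 1)) (n := n)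
    push_cast at h
    rw [show (0:ℝ) + 1 = 1 by norm_num] at h
    rw [← h]
    apply Finset.sum_congr rfl
    intro k _
    rw [div_sub_div _ _ (by positivity) (by positivity)]
    congr 1 <;> ring
  simp only [hps, div_one]
  have h0 : Filter.Tendsto (fun n : ℕ => δ ^ 2 * (1 / ((n : ℝ) + 1)))
      Filter.atTop (nhds (δ ^ 2 * 0)) :=
    (tendsto_one_div_add_atTop_nhds_zero_nat).const_mul (δ ^ 2)
  have := (tendsto_const_nhds (x := δ ^ 2) (f := Filter.atTop (α := ℕ))).sub h0
  simp only [mul_zero, sub_zero] at this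
  convert this using 2 with n
  · ring

lemma upper_exp (B N L : ℝ) (hB : 0 < B) (hN : 0 < N) (hL : 0 < L) :
    ∃ t : ℝ, 0 ≤ t ∧
      -t * (N + (2 * Real.sqrt (B * N * L) + B * L)) + (Real.exp (t * B) - 1) * N / B
        ≤ -(2 * L) := by
  set s := Real.sqrt (B * L / N) with hs_def
  have hs : 0 < s := Real.sqrt_pos.2 (by positivity)
  have hs2 : s ^ 2 = B * L / N := Real.sq_sqrt (by positivity)
  have hBL : B * L = N * s ^ 2 := by rw [hs2]; field_simp
  have hsq : Real.sqrt (B * N * L) = N * s := by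
    rw [hs_def, ← Real.sqrt_sq hN.le, ← Real.sqrt_mul (by positivity)]
    congr 1; field_simp; rw [Real.sq_sqrt (by positivity)]
  refine ⟨Real.log ((1 + s) ^ 2) / B, ?_, ?_⟩
  · apply div_nonneg _ hB.le
    apply Real.log_nonneg; nlinarith
  · have htB : Real.log ((1 + s) ^ 2) / B * B = Real.log ((1 + s) ^ 2) := by
      field_simp
    rw [htB, Real.exp_log (by positivity), Real.log_pow]
    have key := lemB s hs.le
    have hL' : L = N * s ^ 2 / B := by rw [hs2]; field_simp
    rw [hsq, hL']
    have expand :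
        -(Real.log ((1 + s) ^ 2) / B) * (N + (2 * (N * s) + B * (N * s ^ 2 / B)))
          + ((1 + s) ^ 2 - 1) * N / B
        = (-(2 * Real.log (1 + s)) * (N * (1 + s) ^ 2) + (2 * s + s ^ 2) * N) / B := by
      rw [Real.log_pow]; push_cast; field_simp; ring
    rw [Real.log_pow] at expand
    push_cast at expand ⊢
    rw [expand]
    have hrw : -(2 * (N * s ^ 2 / B)) = -(2 * N * s ^ 2) / B := by ring
    rw [hrw, div_le_div_iff_of_pos_right hB]
    nlinarith [key, hN]

lemma lower_exp (B N L a : ℝ) (hB : 0 < B) (hN : 0 < N) (hL : 0 < L)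
    (ha_def : a = 2 * Real.sqrt (B * N * L) + B * L) (hle : a ≤ N) :
    ∃ t : ℝ, t ≤ 0 ∧
      -t * (N - a) + (Real.exp (t * B) - 1) * N / B ≤ -(2 * L) := by
  have hsqnn : 0 ≤ Real.sqrt (B * N * L) := Real.sqrt_nonneg _
  have hsq2 : Real.sqrt (B * N * L) ^ 2 = B * N * L := Real.sq_sqrt (by positivity)
  have ha_pos : 0 < a := by rw [ha_def]; positivity
  have ha2 : 4 * (B * N * L) ≤ a ^ 2 := by nlinarith [mul_pos hB hL]
  set t : ℝ := -(a / (N * B)) with ht_def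
  have htB : t * B = -(a / N) := by rw [ht_def]; field_simp
  have ht0 : t ≤ 0 := by rw [ht_def]; simp; positivity
  refine ⟨t, ht0, ?_⟩
  have hC := lemC (t * B) (by rw [htB]; simp; positivity)
  have h1 : (Real.exp (t * B) - 1) * N / B ≤ (t * B + (t * B) ^ 2 / 2) * N / B := by
    have hNB : 0 ≤ N / B := by positivity
    rw [mul_div_assoc, mul_div_assoc]
    exact mul_le_mul_of_nonneg_right (by linarith) hNB
  have h2 : -t * (N - a) + (t * B + (t * B) ^ 2 / 2) * N / B ≤ -(2 * L) := by
    rw [ht_def]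
    have heq : - -(a / (N * B)) * (N - a)
        + (-(a / (N * B)) * B + (-(a / (N * B)) * B) ^ 2 / 2) * N / B
        = -(a ^ 2 / (2 * (N * B))) := by
      field_simp
      ring
    rw [heq, neg_le_neg_iff, le_div_iff₀ (by positivity)]
    nlinarith
  linarith

variable {Ω : Type*} {m0 : MeasurableSpace Ω} {μ : Measure Ω} [IsProbabilityMeasure μ]

lemma int_of_Icc {Y : Ω → ℝ} {B : ℝ} (hY : Measurable Y)
    (hbdd : ∀ᵐ ω ∂μ, Y ω ∈ Set.Icc (0:ℝ) B) : Integrable Y μ := by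
  refine (integrable_const B).mono' hY.aestronglyMeasurable ?_
  filter_upwards [hbdd] with ω hω
  rw [Real.norm_eq_abs, abs_of_nonneg hω.1]; exact hω.2

lemma int_exp_of_Icc {Y : Ω → ℝ} {B t : ℝ} (hY : Measurable Y)
    (hbdd : ∀ᵐ ω ∂μ, Y ω ∈ Set.Icc (0:ℝ) B) :
    Integrable (fun ω => exp (t * Y ω)) μ := by
  refine (integrable_const (exp (|t| * B))).mono'
    ((hY.const_mul t).exp.aestronglyMeasurable) ?_
  filter_upwards [hbdd] with ω hω
  rw [Real.norm_eq_abs, abs_of_nonneg (exp_pos _).le, exp_le_exp]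
  calc t * Y ω ≤ |t * Y ω| := le_abs_self _
  _ = |t| * |Y ω| := abs_mul _ _
  _ ≤ |t| * B := by
      apply mul_le_mul_of_nonneg_left _ (abs_nonneg t)
      rw [abs_of_nonneg hω.1]; exact hω.2

lemma mgf_le_of_Icc {Y : Ω → ℝ} {B m t : ℝ} (hB : 0 < B) (hY : Measurable Y)
    (hbdd : ∀ᵐ ω ∂μ, Y ω ∈ Set.Icc (0:ℝ) B) (hm : ∫ ω, Y ω ∂μ = m) :
    mgf Y μ t ≤ exp ((exp (t * B) - 1) * m / B) := by
  have hint : Integrable Y μ := int_of_Icc hY hbdd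
  have key : mgf Y μ t ≤ 1 + (exp (t * B) - 1) / B * m := by
    rw [mgf]
    have h2 : ∫ ω, (1 + (exp (t * B) - 1) / B * Y ω) ∂μ
        = 1 + (exp (t * B) - 1) / B * m := by
      rw [integral_add (integrable_const _) (hint.const_mul _), MeasureTheory.integral_const_mul, hm]
      simp
    rw [← h2]
    apply integral_mono_ae (int_exp_of_Icc hY hbdd)
      ((integrable_const _).add (hint.const_mul _))
    filter_upwards [hbdd] with ω hω
    obtain ⟨h0, hxB⟩ := hω
    set x := Y ω with hx
    have hxB' : x / B ≤ 1 := (div_le_one hB).2 hxB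
    have ha : (0:ℝ) ≤ 1 - x / B := sub_nonneg.2 hxB'
    have hb : (0:ℝ) ≤ x / B := div_nonneg h0 hB.le
    have hab : (1 - x / B) + x / B = 1 := by ring
    have := convexOn_exp.2 (Set.mem_univ 0) (Set.mem_univ (t * B)) ha hb hab
    simp only [smul_eq_mul, mul_zero, zero_add, exp_zero, mul_one] at this
    have harg : x / B * (t * B) = t * x := by field_simp
    rw [harg] at this
    calc exp (t * x) ≤ (1 - x / B) + x / B * exp (t * B) := this
    _ = 1 + (exp (t * B) - 1) / B * x := by field_simp; ring
  calc mgf Y μ t ≤ 1 + (exp (t * B) - 1) / B * m := key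
  _ ≤ exp ((exp (t * B) - 1) / B * m) := by linarith [add_one_le_exp ((exp (t * B) - 1) / B * m)]
  _ = exp ((exp (t * B) - 1) * m / B) := by ring_nf

lemma chernoff_up (X : ℕ → Ω → ℝ) {B m : ℝ} (hB : 0 < B)
    (hmeas : ∀ i, Measurable (X i))
    (hindep : iIndepFun X μ)
    (hmean : ∀ i, ∫ ω, X i ω ∂μ = m)
    (hbdd : ∀ i, ∀ᵐ ω ∂μ, X i ω ∈ Set.Icc (0 : ℝ) B)
    (n : ℕ) (t ε : ℝ) (ht : 0 ≤ t) :
    (μ {ω | ε ≤ ∑ i ∈ Finset.Icc 1 n, X i ω}).toReal ≤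
      exp (-t * ε + n * ((exp (t * B) - 1) * m / B)) := by
  have hint : ∀ i ∈ Finset.Icc 1 n, Integrable (fun ω => exp (t * X i ω)) μ :=
    fun i _ => int_exp_of_Icc (hmeas i) (hbdd i)
  have hS := measure_ge_le_exp_mul_mgf (X := ∑ i ∈ Finset.Icc 1 n, X i) (μ := μ) ε ht
    (hindep.integrable_exp_mul_sum hmeas hint)
  have hsets : {ω | ε ≤ (∑ i ∈ Finset.Icc 1 n, X i) ω} = {ω | ε ≤ ∑ i ∈ Finset.Icc 1 n, X i ω} := by
    ext ω; simp [Finset.sum_apply]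
  rw [hsets, hindep.mgf_sum hmeas] at hS
  refine hS.trans ?_
  rw [Real.exp_add]
  apply mul_le_mul_of_nonneg_left _ (Real.exp_pos _).le
  calc ∏ i ∈ Finset.Icc 1 n, mgf (X i) μ t
      ≤ ∏ _i ∈ Finset.Icc 1 n, exp ((exp (t * B) - 1) * m / B) :=
        Finset.prod_le_prod (fun i _ => mgf_nonneg)
          (fun i _ => mgf_le_of_Icc hB (hmeas i) (hbdd i) (hmean i))
  _ = exp ((exp (t * B) - 1) * m / B) ^ n := by
      rw [Finset.prod_const, Nat.card_Icc]; norm_num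
  _ = exp (n * ((exp (t * B) - 1) * m / B)) := (Real.exp_nat_mul _ n).symm

lemma chernoff_low (X : ℕ → Ω → ℝ) {B m : ℝ} (hB : 0 < B)
    (hmeas : ∀ i, Measurable (X i))
    (hindep : iIndepFun X μ)
    (hmean : ∀ i, ∫ ω, X i ω ∂μ = m)
    (hbdd : ∀ i, ∀ᵐ ω ∂μ, X i ω ∈ Set.Icc (0 : ℝ) B)
    (n : ℕ) (t ε : ℝ) (ht : t ≤ 0) :
    (μ {ω | ∑ i ∈ Finset.Icc 1 n, X i ω ≤ ε}).toReal ≤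
      exp (-t * ε + n * ((exp (t * B) - 1) * m / B)) := by
  have hint : ∀ i ∈ Finset.Icc 1 n, Integrable (fun ω => exp (t * X i ω)) μ :=
    fun i _ => int_exp_of_Icc (hmeas i) (hbdd i)
  have hS := measure_le_le_exp_mul_mgf (X := ∑ i ∈ Finset.Icc 1 n, X i) (μ := μ) ε ht
    (hindep.integrable_exp_mul_sum hmeas hint)
  have hsets : {ω | (∑ i ∈ Finset.Icc 1 n, X i) ω ≤ ε} = {ω | ∑ i ∈ Finset.Icc 1 n, X i ω ≤ ε} := by
    ext ω; simp [Finset.sum_apply]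
  rw [hsets, hindep.mgf_sum hmeas] at hS
  refine hS.trans ?_
  rw [Real.exp_add]
  apply mul_le_mul_of_nonneg_left _ (Real.exp_pos _).le
  calc ∏ i ∈ Finset.Icc 1 n, mgf (X i) μ t
      ≤ ∏ _i ∈ Finset.Icc 1 n, exp ((exp (t * B) - 1) * m / B) :=
        Finset.prod_le_prod (fun i _ => mgf_nonneg)
          (fun i _ => mgf_le_of_Icc hB (hmeas i) (hbdd i) (hmean i))
  _ = exp ((exp (t * B) - 1) * m / B) ^ n := by
      rw [Finset.prod_const, Nat.card_Icc]; norm_num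
  _ = exp (n * ((exp (t * B) - 1) * m / B)) := (Real.exp_nat_mul _ n).symm

lemma per_n (X : ℕ → Ω → ℝ) {B m : ℝ} (hB : 0 < B) (hm : 0 < m)
    (hmeas : ∀ i, Measurable (X i))
    (hindep : iIndepFun X μ)
    (hmean : ∀ i, ∫ ω, X i ω ∂μ = m)
    (hbdd : ∀ i, ∀ᵐ ω ∂μ, X i ω ∈ Set.Icc (0 : ℝ) B)
    {δ : ℝ} (hδ : δ ∈ Set.Ioo (0 : ℝ) 1) (n : ℕ) (hn : 1 ≤ n) :
    μ {ω | ¬ |∑ i ∈ Finset.Icc 1 n, (X i ω - m)| ≤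
        2 * Real.sqrt (B * m * n * Real.log (2 * n / δ)) + B * Real.log (2 * n / δ)} ≤
      ENNReal.ofReal (δ ^ 2 / (2 * (n : ℝ) ^ 2)) := by
  obtain ⟨hδ0, hδ1⟩ := hδ
  have hn1 : (1 : ℝ) ≤ (n : ℝ) := by exact_mod_cast hn
  set L : ℝ := Real.log (2 * n / δ) with hL_def
  have hL : 0 < L := by
    apply Real.log_pos
    rw [lt_div_iff₀ hδ0]
    nlinarith
  set N : ℝ := (n : ℝ) * m with hN_def
  have hN : 0 < N := by positivity
  set a : ℝ := 2 * Real.sqrt (B * m * n * L) + B * L with ha_def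
  have ha' : a = 2 * Real.sqrt (B * N * L) + B * L := by
    rw [ha_def, show B * m * (n:ℝ) * L = B * N * L by rw [hN_def]; ring]
  have ha_pos : 0 < a := by
    rw [ha_def]; positivity
  -- the value exp(-(2L))
  have hexpL : Real.exp (-(2 * L)) = (δ / (2 * n)) ^ 2 := by
    have hlog : Real.log (δ / (2 * n)) = -L := by
      rw [show δ / (2 * (n:ℝ)) = (2 * (n:ℝ) / δ)⁻¹ by rw [inv_div], Real.log_inv, hL_def]
    calc Real.exp (-(2 * L)) = Real.exp (Real.log (δ / (2 * n)) + Real.log (δ / (2 * n))) := by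
          rw [hlog]; ring_nf
    _ = (δ / (2 * n)) * (δ / (2 * n)) := by
          rw [Real.exp_add, Real.exp_log (by positivity)]
    _ = (δ / (2 * n)) ^ 2 := by ring
  -- upper tail
  have hup : μ {ω | N + a ≤ ∑ i ∈ Finset.Icc 1 n, X i ω} ≤
      ENNReal.ofReal (Real.exp (-(2 * L))) := by
    obtain ⟨t, ht0, hexp⟩ := upper_exp B N L hB hN hL
    have hch := chernoff_up X hB hmeas hindep hmean hbdd n t (N + a) ht0
    rw [ENNReal.le_ofReal_iff_toReal_le (measure_ne_top μ _) (Real.exp_pos _).le]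
    refine hch.trans ?_
    rw [Real.exp_le_exp]
    calc -t * (N + a) + n * ((Real.exp (t * B) - 1) * m / B)
        = -t * (N + a) + (Real.exp (t * B) - 1) * N / B := by rw [hN_def]; ring
    _ ≤ -(2 * L) := by rw [ha'] at *; exact hexp
  -- lower tail
  have hlow : μ {ω | ∑ i ∈ Finset.Icc 1 n, X i ω ≤ N - a} ≤
      ENNReal.ofReal (Real.exp (-(2 * L))) := by
    by_cases hcase : a ≤ N
    · obtain ⟨t, ht0, hexp⟩ := lower_exp B N L a hB hN hL ha' hcase
      have hch := chernoff_low X hB hmeas hindep hmean hbdd n t (N - a) ht0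
      rw [ENNReal.le_ofReal_iff_toReal_le (measure_ne_top μ _) (Real.exp_pos _).le]
      refine hch.trans ?_
      rw [Real.exp_le_exp]
      calc -t * (N - a) + n * ((Real.exp (t * B) - 1) * m / B)
          = -t * (N - a) + (Real.exp (t * B) - 1) * N / B := by rw [hN_def]; ring
      _ ≤ -(2 * L) := hexp
    · have : μ {ω | ∑ i ∈ Finset.Icc 1 n, X i ω ≤ N - a} = 0 := by
        rw [measure_eq_zero_iff_ae_notMem]
        filter_upwards [ae_all_iff.mpr hbdd] with ω hω
        simp only [Set.mem_setOf_eq, not_le]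
        have hsum : 0 ≤ ∑ i ∈ Finset.Icc 1 n, X i ω :=
          Finset.sum_nonneg fun i _ => (hω i).1
        linarith [not_le.1 hcase]
      rw [this]; exact zero_le
  -- combine
  have hsub : {ω | ¬ |∑ i ∈ Finset.Icc 1 n, (X i ω - m)| ≤ a} ⊆
      {ω | N + a ≤ ∑ i ∈ Finset.Icc 1 n, X i ω} ∪
      {ω | ∑ i ∈ Finset.Icc 1 n, X i ω ≤ N - a} := by
    intro ω hω
    simp only [Set.mem_setOf_eq, not_le] at hω
    have hsum : ∑ i ∈ Finset.Icc 1 n, (X i ω - m)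
        = (∑ i ∈ Finset.Icc 1 n, X i ω) - N := by
      rw [Finset.sum_sub_distrib, Finset.sum_const, Nat.card_Icc, hN_def]
      simp only [nsmul_eq_mul]
      push_cast [Nat.add_sub_cancel]
      ring
    rw [hsum] at hω
    rcases lt_abs.1 hω with h | h
    · left; simp only [Set.mem_setOf_eq]; linarith
    · right; simp only [Set.mem_setOf_eq]; linarith
  calc μ {ω | ¬ |∑ i ∈ Finset.Icc 1 n, (X i ω - m)| ≤ a}
      ≤ μ ({ω | N + a ≤ ∑ i ∈ Finset.Icc 1 n, X i ω} ∪
          {ω | ∑ i ∈ Finset.Icc 1 n, X i ω ≤ N - a}) := measure_mono hsub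
  _ ≤ μ {ω | N + a ≤ ∑ i ∈ Finset.Icc 1 n, X i ω} +
      μ {ω | ∑ i ∈ Finset.Icc 1 n, X i ω ≤ N - a} := measure_union_le _ _
  _ ≤ ENNReal.ofReal (Real.exp (-(2 * L))) + ENNReal.ofReal (Real.exp (-(2 * L))) :=
      add_le_add hup hlow
  _ = ENNReal.ofReal (Real.exp (-(2 * L)) + Real.exp (-(2 * L))) :=
      (ENNReal.ofReal_add (Real.exp_pos _).le (Real.exp_pos _).le).symm
  _ = ENNReal.ofReal (δ ^ 2 / (2 * (n : ℝ) ^ 2)) := by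
      rw [hexpL]
      congr 1
      field_simp
      ring

end AnytimeBernsteinAux

open MeasureTheory ProbabilityTheory Finset

/-- Anytime Bernstein inequality: for an i.i.d. sequence `(X n)` with expectation `m`
and `0 ≤ X n ≤ B` almost surely, with probability at least `1 - δ`, simultaneously for
all `n ≥ 1`, `|∑_{i=1}^n (X i - m)| ≤ 2√(B m n log(2n/δ)) + B log(2n/δ)`. -/
theorem anytime_bernstein
    {Ω : Type*} {m0 : MeasurableSpace Ω} {μ : Measure Ω} [IsProbabilityMeasure μ]
    (X : ℕ → Ω → ℝ) (B m : ℝ) (hB : 0 < B)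
    (hmeas : ∀ i, Measurable (X i))
    (hindep : iIndepFun X μ)
    (hident : ∀ i j, IdentDistrib (X i) (X j) μ μ)
    (hmean : ∀ i, ∫ ω, X i ω ∂μ = m)
    (hbdd : ∀ i, ∀ᵐ ω ∂μ, X i ω ∈ Set.Icc (0 : ℝ) B)
    (δ : ℝ) (hδ : δ ∈ Set.Ioo (0 : ℝ) 1) :
    ENNReal.ofReal (1 - δ) ≤
      μ {ω | ∀ n : ℕ, 1 ≤ n →
        |∑ i ∈ Finset.Icc 1 n, (X i ω - m)| ≤
          2 * Real.sqrt (B * m * n * Real.log (2 * n / δ)) + B * Real.log (2 * n / δ)} := by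
  obtain ⟨hδ0, hδ1⟩ := hδ
  set G : Set Ω := {ω | ∀ n : ℕ, 1 ≤ n →
      |∑ i ∈ Finset.Icc 1 n, (X i ω - m)| ≤
        2 * Real.sqrt (B * m * n * Real.log (2 * n / δ)) + B * Real.log (2 * n / δ)}
    with hG_def
  -- positivity of the logs
  have hLpos : ∀ n : ℕ, 1 ≤ n → 0 < Real.log (2 * n / δ) := by
    intro n hn
    have hn1 : (1 : ℝ) ≤ (n : ℝ) := by exact_mod_cast hn
    apply Real.log_pos
    rw [lt_div_iff₀ hδ0]
    nlinarith
  have hm0 : 0 ≤ m := by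
    rw [← hmean 0]
    apply integral_nonneg_of_ae
    filter_upwards [hbdd 0] with ω h using h.1
  -- the generic lower bound via the complement
  have hcompl : ∀ c : ENNReal, μ Gᶜ ≤ c → 1 - c ≤ μ G := by
    intro c hc
    rw [tsub_le_iff_right]
    calc (1 : ENNReal) = μ Set.univ := measure_univ.symm
    _ = μ (G ∪ Gᶜ) := by rw [Set.union_compl_self]
    _ ≤ μ G + μ Gᶜ := measure_union_le _ _
    _ ≤ μ G + c := add_le_add le_rfl hc
  have hofReal : ENNReal.ofReal (1 - δ) = 1 - ENNReal.ofReal δ := by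
    rw [ENNReal.ofReal_sub 1 hδ0.le, ENNReal.ofReal_one]
  rcases hm0.eq_or_lt with hm | hm
  · -- degenerate case m = 0 : all X i vanish a.e.
    have hzero : ∀ i, ∀ᵐ ω ∂μ, X i ω = 0 := by
      intro i
      have hint : Integrable (X i) μ := int_of_Icc (hmeas i) (hbdd i)
      have h0 : 0 ≤ᵐ[μ] X i := by filter_upwards [hbdd i] with ω h using h.1
      have heq : X i =ᵐ[μ] 0 :=
        (integral_eq_zero_iff_of_nonneg_ae h0 hint).1 (by rw [hmean i, ← hm])
      filter_upwards [heq] with ω h using h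
    have hGc : μ Gᶜ ≤ 0 := by
      apply le_of_eq
      apply measure_eq_zero_iff_ae_notMem.2
      filter_upwards [ae_all_iff.mpr hzero] with ω hω
      simp only [Set.mem_compl_iff, not_not, hG_def, Set.mem_setOf_eq]
      intro n hn
      have hsum : ∑ i ∈ Finset.Icc 1 n, (X i ω - m) = 0 := by
        apply Finset.sum_eq_zero
        intro i _
        rw [hω i, ← hm]
        ring
      rw [hsum, abs_zero]
      have := hLpos n hn
      positivity
    calc ENNReal.ofReal (1 - δ) = 1 - ENNReal.ofReal δ := hofReal
    _ ≤ 1 - 0 := by apply tsub_le_tsub_left zero_le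
    _ ≤ μ G := by simpa using hcompl 0 hGc
  · -- main case m > 0
    have hGc : μ Gᶜ ≤ ENNReal.ofReal δ := by
      have hsub : Gᶜ ⊆ ⋃ k : ℕ, {ω | ¬ |∑ i ∈ Finset.Icc 1 (k+1), (X i ω - m)| ≤
          2 * Real.sqrt (B * m * (k+1 : ℕ) * Real.log (2 * (k+1 : ℕ) / δ))
            + B * Real.log (2 * (k+1 : ℕ) / δ)} := by
        intro ω hω
        simp only [Set.mem_compl_iff, hG_def, Set.mem_setOf_eq] at hω
        push_neg at hω
        obtain ⟨n, hn, hbad⟩ := hω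
        refine Set.mem_iUnion.2 ⟨n - 1, ?_⟩
        have hnn : n - 1 + 1 = n := Nat.succ_pred_eq_of_pos hn
        simp only [Set.mem_setOf_eq, hnn]
        exact not_le.2 hbad
      calc μ Gᶜ ≤ ∑' k : ℕ, μ {ω | ¬ |∑ i ∈ Finset.Icc 1 (k+1), (X i ω - m)| ≤
            2 * Real.sqrt (B * m * (k+1 : ℕ) * Real.log (2 * (k+1 : ℕ) / δ))
              + B * Real.log (2 * (k+1 : ℕ) / δ)} :=
          (measure_mono hsub).trans (measure_iUnion_le _)
      _ ≤ ∑' k : ℕ, ENNReal.ofReal (δ ^ 2 / (((k : ℝ) + 1) * ((k : ℝ) + 2))) := by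
          apply ENNReal.tsum_le_tsum
          intro k
          refine (per_n X hB hm hmeas hindep hmean hbdd ⟨hδ0, hδ1⟩ (k+1)
            (Nat.le_add_left 1 k)).trans ?_
          apply ENNReal.ofReal_le_ofReal
          have hk1 : ((k + 1 : ℕ) : ℝ) = (k : ℝ) + 1 := by push_cast; ring
          rw [hk1]
          apply div_le_div_of_nonneg_left (by positivity) (by positivity)
          nlinarith [sq_nonneg ((k:ℝ))]
      _ = ENNReal.ofReal (∑' k : ℕ, δ ^ 2 / (((k : ℝ) + 1) * ((k : ℝ) + 2))) :=
          (ENNReal.ofReal_tsum_of_nonneg (fun k => by positivity)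
            (telesum δ hδ0).summable).symm
      _ = ENNReal.ofReal (δ ^ 2) := by rw [(telesum δ hδ0).tsum_eq]
      _ ≤ ENNReal.ofReal δ := ENNReal.ofReal_le_ofReal (by nlinarith)
    calc ENNReal.ofReal (1 - δ) = 1 - ENNReal.ofReal δ := hofReal
    _ ≤ μ G := by
        refine le_trans (tsub_le_tsub_left (le_refl _) 1) (hcompl _ hGc)
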